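/- arXiv:2103.00989 — 3 statements merged into one kernel-verified Lean document; each statement's English description precedes it below -/
import Mathlib

section
/- Let c₁ < ... < c_q be positive integers (q ≥ 0) and λ₁, ..., λ_q nonzero integers, and define f = ∑_{j=1}^q λ_j I_{c_j} : ℤ → ℂ. Then the fundamental (smallest positive) period of f is lcm(c₁, ..., c_q) (interpreted as 1 when q = 0). -/
/-- The `ℂ`-valued indicator of divisibility: `1` if `a ∣ x` and `0` otherwise. -/
def I (a : ℕ) (x : ℤ) : ℂ := if (a : ℤ) ∣ x then 1 else 0


lemma I_add_of_dvd {a n : ℕ} (h : a ∣ n) (x : ℤ) : I a (x + n) = I a x := by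
  unfold I
  congr 1
  simp only [eq_iff_iff]
  have hn : (a : ℤ) ∣ (n : ℤ) := Int.natCast_dvd_natCast.mpr h
  constructor
  · intro hd
    have := hd.sub hn; simpa using this
  · intro hd
    exact hd.add hn

-- shift invariance of sums of L-periodic functions
lemma sum_shift (h : ℤ → ℂ) (L : ℕ) (hL : ∀ x : ℤ, h (x + L) = h x) (s : ℕ) :
    ∑ x ∈ Finset.range L, h (x + s) = ∑ x ∈ Finset.range L, h x := by
  induction s with
  | zero => simp
  | succ s ih =>
    have step : ∑ x ∈ Finset.range L, h (x + (s+1)) = ∑ x ∈ Finset.range L, h (x + s) := by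
      have h1 : ∑ x ∈ Finset.range (L+1), h (x + s) =
          (∑ x ∈ Finset.range L, h ((x+1 : ℕ) + s)) + h ((0:ℕ) + s) :=
        Finset.sum_range_succ' (fun x : ℕ => h (x + s)) L
      have h2 : ∑ x ∈ Finset.range (L+1), h (x + s) =
          (∑ x ∈ Finset.range L, h (x + s)) + h ((L:ℕ) + s) :=
        Finset.sum_range_succ (fun x : ℕ => h (x + s)) L
      have h3 : h ((L:ℕ) + s) = h ((0:ℕ) + s) := by
        have := hL ((0:ℕ) + s)
        rw [← this]; congr 1; push_cast; ring
      have h4 : ∀ x : ℕ, h ((x+1 : ℕ) + s) = h (x + (s+1 : ℕ)) := by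
        intro x; congr 1; push_cast; ring
      simp only [h4] at h1
      have := h1.symm.trans h2
      rw [h3] at this
      push_cast at this ⊢
      linear_combination this
    push_cast at step ⊢
    rw [step, ih]

lemma sum_indicator_geom (ζ : ℂ) (c n : ℕ) (hc : 0 < c) :
    ∑ x ∈ Finset.range (c * n), (if c ∣ x then ζ ^ x else 0)
      = ∑ y ∈ Finset.range n, (ζ ^ c) ^ y := by
  induction n with
  | zero => simp
  | succ n ih =>
    rw [Nat.mul_succ, Finset.sum_range_add, ih, Finset.sum_range_succ]
    congr 1
    have key : ∀ i ∈ Finset.range c,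
        (if c ∣ c * n + i then ζ ^ (c * n + i) else 0)
          = (if i = 0 then ζ ^ (c * n + i) else 0) := by
      intro i hi
      rw [Finset.mem_range] at hi
      congr 1
      simp only [eq_iff_iff]
      constructor
      · intro hd
        have : c ∣ i := (Nat.dvd_add_right (Dvd.intro n rfl)).mp hd
        exact Nat.eq_zero_of_dvd_of_lt this hi
      · rintro rfl; simp
    rw [Finset.sum_congr rfl key, Finset.sum_ite_eq' (Finset.range c) 0
      (fun i => ζ ^ (c * n + i))]
    simp [hc, pow_mul]

lemma last_dvd_period (q : ℕ) (c : Fin (q+1) → ℕ) (hc : StrictMono c)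
    (hcpos : ∀ j, 0 < c j) (lam : Fin (q+1) → ℤ) (hlam : ∀ j, lam j ≠ 0) (ω : ℕ)
    (hper : ∀ x : ℤ, (∑ j, (lam j : ℂ) * I (c j) (x + ω)) = ∑ j, (lam j : ℂ) * I (c j) x) :
    c (Fin.last q) ∣ ω := by
  set L := Finset.univ.lcm c with hLdef
  set m := Fin.last q with hm
  have hcmL : c m ∣ L := Finset.dvd_lcm (Finset.mem_univ m)
  have hLpos : 0 < L := by
    rw [Nat.pos_iff_ne_zero, hLdef, Ne, Finset.lcm_eq_zero_iff]
    intro h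
    simp only [Finset.mem_univ, true_and] at h
    obtain ⟨j, hj⟩ := h
    exact (hcpos j).ne' hj
  have hcm : 0 < c m := hcpos m
  set ζ : ℂ := Complex.exp (2 * Real.pi * Complex.I / (c m)) with hζdef
  have hζ : IsPrimitiveRoot ζ (c m) := Complex.isPrimitiveRoot_exp _ hcm.ne'
  have hζL : ζ ^ L = 1 := (hζ.pow_eq_one_iff_dvd L).mpr hcmL
  -- the weighted sum
  set S : ℂ := ∑ x ∈ Finset.range L, (∑ j, (lam j : ℂ) * I (c j) (x : ℤ)) * ζ ^ x with hS
  -- compute S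
  have hinner : ∀ j : Fin (q+1),
      ∑ x ∈ Finset.range L, I (c j) (x : ℤ) * ζ ^ x
        = ∑ y ∈ Finset.range (L / c j), (ζ ^ (c j)) ^ y := by
    intro j
    have hdvd : c j ∣ L := Finset.dvd_lcm (Finset.mem_univ j)
    obtain ⟨n, hn⟩ := hdvd
    have hLc : L / c j = n := by rw [hn, Nat.mul_div_cancel_left _ (hcpos j)]
    rw [hLc]
    calc ∑ x ∈ Finset.range L, I (c j) (x : ℤ) * ζ ^ x
        = ∑ x ∈ Finset.range (c j * n), (if c j ∣ x then ζ ^ x else 0) := by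
          rw [hn]
          refine Finset.sum_congr rfl fun x _ => ?_
          simp only [I, Int.natCast_dvd_natCast, ite_mul, one_mul, zero_mul]
      _ = _ := sum_indicator_geom ζ (c j) n (hcpos j)
  have hSval : S = (lam m : ℂ) * (L / c m : ℕ) := by
    have hswap : S = ∑ j, (lam j : ℂ) * ∑ x ∈ Finset.range L, I (c j) (x : ℤ) * ζ ^ x := by
      rw [hS]
      simp_rw [Finset.sum_mul]
      rw [Finset.sum_comm]
      refine Finset.sum_congr rfl fun j _ => ?_
      rw [Finset.mul_sum]
      simp_rw [mul_assoc]
    have hzero : ∀ j, j ≠ m → ∑ y ∈ Finset.range (L / c j), (ζ ^ (c j)) ^ y = 0 := by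
      intro j hj
      have hlt : c j < c m := hc (lt_of_le_of_ne (Fin.le_last j) hj)
      have hnd : ¬ c m ∣ c j := Nat.not_dvd_of_pos_of_lt (hcpos j) hlt
      have hne1 : ζ ^ (c j) ≠ 1 := fun h => hnd ((hζ.pow_eq_one_iff_dvd _).mp h)
      rw [geom_sum_eq hne1]
      have hdvd : c j ∣ L := Finset.dvd_lcm (Finset.mem_univ j)
      have h1 : (ζ ^ (c j)) ^ (L / c j) = 1 := by
        rw [← pow_mul, Nat.mul_div_cancel' hdvd, hζL]
      rw [h1]
      simp
    rw [hswap, Fintype.sum_eq_single m (fun j hj => by rw [hinner j, hzero j hj, mul_zero]),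
      hinner m]
    have hζcm : ζ ^ (c m) = 1 := (hζ.pow_eq_one_iff_dvd _).mpr dvd_rfl
    rw [hζcm]
    simp
  -- S is nonzero
  have hSne : S ≠ 0 := by
    rw [hSval]
    refine mul_ne_zero ?_ ?_
    · exact_mod_cast hlam m
    · have : 0 < L / c m := Nat.div_pos (Nat.le_of_dvd hLpos hcmL) hcm
      exact_mod_cast this.ne'
  -- periodicity forces ζ ^ ω = 1
  have hζne : ζ ≠ 0 := hζdef ▸ Complex.exp_ne_zero _
  set h : ℤ → ℂ := fun x => (∑ j, (lam j : ℂ) * I (c j) x) * ζ ^ x with hh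
  have hperL : ∀ x : ℤ, h (x + L) = h x := by
    intro x
    rw [hh]
    simp only
    congr 1
    · exact Finset.sum_congr rfl fun j _ => by
        rw [I_add_of_dvd (Finset.dvd_lcm (Finset.mem_univ j))]
    · rw [zpow_add₀ hζne, zpow_natCast, hζL, mul_one]
  have hshift := sum_shift h L hperL ω
  have hlhs : ∑ x ∈ Finset.range L, h (x + ω) = ζ ^ ω * S := by
    rw [hS, Finset.mul_sum]
    refine Finset.sum_congr rfl fun x _ => ?_
    rw [hh]
    simp only
    rw [hper (x : ℤ), zpow_add₀ hζne, zpow_natCast, zpow_natCast]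
    ring
  have hrhs : ∑ x ∈ Finset.range L, h (x : ℤ) = S := by
    rw [hS]
    refine Finset.sum_congr rfl fun x _ => ?_
    rw [hh]
    simp only
    rw [zpow_natCast]
  rw [hlhs, hrhs] at hshift
  have hζω : ζ ^ ω = 1 := by
    have := mul_right_cancel₀ hSne (hshift.trans (one_mul S).symm)
    exact this
  exact (hζ.pow_eq_one_iff_dvd ω).mp hζω

lemma all_dvd_period : ∀ (q : ℕ) (c : Fin q → ℕ), StrictMono c → (∀ j, 0 < c j) →
    ∀ (lam : Fin q → ℤ), (∀ j, lam j ≠ 0) → ∀ (ω : ℕ),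
    (∀ x : ℤ, (∑ j, (lam j : ℂ) * I (c j) (x + ω)) = ∑ j, (lam j : ℂ) * I (c j) x) →
    ∀ j, c j ∣ ω := by
  intro q
  induction q with
  | zero => intro c _ _ lam _ ω _ j; exact j.elim0
  | succ q ih =>
    intro c hc hcpos lam hlam ω hper j
    have hlast : c (Fin.last q) ∣ ω :=
      last_dvd_period q c hc hcpos lam hlam ω hper
    rcases eq_or_ne j (Fin.last q) with rfl | hj
    · exact hlast
    · -- j = castSucc of some i
      obtain ⟨i, rfl⟩ := Fin.exists_castSucc_eq.mpr hj
      refine ih (c ∘ Fin.castSucc) (hc.comp Fin.strictMono_castSucc)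
        (fun j => hcpos _) (lam ∘ Fin.castSucc) (fun j => hlam _) ω ?_ i
      intro x
      have h1 := hper x
      rw [Fin.sum_univ_castSucc (fun j => (lam j : ℂ) * I (c j) (x + ω)),
        Fin.sum_univ_castSucc (fun j => (lam j : ℂ) * I (c j) x),
        I_add_of_dvd hlast] at h1
      exact add_right_cancel h1

theorem fundamental_period_eq_lcm (q : ℕ)
    (c : Fin q → ℕ) (hc : StrictMono c) (hcpos : ∀ j, 0 < c j)
    (lam : Fin q → ℤ) (hlam : ∀ j, lam j ≠ 0) :
    IsLeast {ω : ℕ | 0 < ω ∧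
        ∀ x : ℤ, (∑ j, (lam j : ℂ) * I (c j) (x + ω)) = ∑ j, (lam j : ℂ) * I (c j) x}
      (Finset.univ.lcm c) := by
  constructor
  · refine ⟨?_, ?_⟩
    · rw [Nat.pos_iff_ne_zero, Ne, Finset.lcm_eq_zero_iff]
      intro h
      simp only [Finset.mem_univ, true_and] at h
      obtain ⟨j, hj⟩ := h
      exact (hcpos j).ne' hj
    · intro x
      refine Finset.sum_congr rfl fun j _ => ?_
      rw [I_add_of_dvd (Finset.dvd_lcm (Finset.mem_univ j))]
  · rintro ω ⟨hω, hper⟩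
    have hdvd : ∀ j, c j ∣ ω := all_dvd_period q c hc hcpos lam hlam ω hper
    exact Nat.le_of_dvd hω (Finset.lcm_dvd fun j _ => hdvd j)
end

section
/- Let g : {roots of unity in ℂ} → ℂ vanish outside a finite set, and define f : ℤ → ℂ by f(x) = ∑_ζ g(ζ) ζ^x. Then f is periodic, and its fundamental period equals lcm{ order(ζ) : g(ζ) ≠ 0 } (interpreted as 1 if g is identically zero). -/
open Finset Polynomial

/-- Vandermonde-type independence: if all power sums vanish, coefficients vanish. -/
lemma aux_vandermonde {s : Finset ℂ} (h : ℂ → ℂ)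
    (hz : ∀ n : ℕ, ∑ ζ ∈ s, h ζ * ζ ^ n = 0) :
    ∀ ζ₀ ∈ s, h ζ₀ = 0 := by
  intro ζ₀ h₀
  set P : Polynomial ℂ := Lagrange.basis s id ζ₀ with hP
  have key : ∑ ζ ∈ s, h ζ * P.eval ζ = h ζ₀ := by
    rw [Finset.sum_eq_single ζ₀]
    · rw [show P.eval ζ₀ = 1 from Lagrange.eval_basis_self (Set.injOn_id _) h₀, mul_one]
    · intro ζ hζ hne
      rw [show P.eval ζ = 0 from Lagrange.eval_basis_of_ne (v := id) (Ne.symm hne) hζ, mul_zero]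
    · intro h'; exact absurd h₀ h'
  rw [← key]
  have : ∑ ζ ∈ s, h ζ * P.eval ζ
      = ∑ j ∈ Finset.range (P.natDegree + 1), P.coeff j * ∑ ζ ∈ s, h ζ * ζ ^ j := by
    simp_rw [Polynomial.eval_eq_sum_range, Finset.mul_sum]
    rw [Finset.sum_comm]
    refine Finset.sum_congr rfl fun j _ => ?_
    exact Finset.sum_congr rfl fun ζ _ => by ring
  rw [this]
  simp [hz]

theorem fundamental_period_of_root_of_unity_sum (g : ℂ → ℂ)
    (hfin : (Function.support g).Finite)
    (hroot : ∀ ζ : ℂ, g ζ ≠ 0 → ∃ n : ℕ, 0 < n ∧ ζ ^ n = 1)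
    (f : ℤ → ℂ) (hf : ∀ x : ℤ, f x = ∑ ζ ∈ hfin.toFinset, g ζ * ζ ^ x) :
    IsLeast {ω : ℕ | 0 < ω ∧ ∀ x : ℤ, f (x + ω) = f x}
      (hfin.toFinset.lcm orderOf) := by
  set s := hfin.toFinset with hs
  have hmem : ∀ ζ ∈ s, g ζ ≠ 0 := by
    intro ζ hζ
    simpa [hs] using hζ
  have hne : ∀ ζ ∈ s, ζ ≠ 0 := by
    intro ζ hζ
    obtain ⟨n, hn, hpow⟩ := hroot ζ (hmem ζ hζ)
    intro h0; rw [h0, zero_pow hn.ne'] at hpow; exact one_ne_zero hpow.symm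
  have hord : ∀ ζ ∈ s, 0 < orderOf ζ := by
    intro ζ hζ
    obtain ⟨n, hn, hpow⟩ := hroot ζ (hmem ζ hζ)
    exact (isOfFinOrder_iff_pow_eq_one.2 ⟨n, hn, hpow⟩).orderOf_pos
  set L := s.lcm orderOf with hL
  have hLpos : 0 < L := by
    rw [Nat.pos_iff_ne_zero]
    intro h0
    rw [hL, Finset.lcm_eq_zero_iff] at h0
    obtain ⟨ζ, hζ, h0⟩ := h0
    exact (hord ζ hζ).ne' h0
  have hpowL : ∀ ζ ∈ s, ζ ^ L = 1 := by
    intro ζ hζ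
    exact orderOf_dvd_iff_pow_eq_one.1 (Finset.dvd_lcm hζ)
  constructor
  · refine ⟨hLpos, fun x => ?_⟩
    rw [hf, hf]
    refine Finset.sum_congr rfl fun ζ hζ => ?_
    rw [zpow_add₀ (hne ζ hζ), zpow_natCast, hpowL ζ hζ, mul_one]
  · rintro ω ⟨hωpos, hω⟩
    -- show L ∣ ω
    have hdvd : L ∣ ω := by
      refine Finset.lcm_dvd fun ζ hζ => ?_
      rw [orderOf_dvd_iff_pow_eq_one]
      -- show g ζ * (ζ^ω - 1) = 0 via Vandermonde
      have hz : ∀ n : ℕ, ∑ ξ ∈ s, (g ξ * (ξ ^ ω - 1)) * ξ ^ n = 0 := by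
        intro n
        have := hω n
        rw [hf, hf] at this
        have h1 : ∑ ξ ∈ s, g ξ * ξ ^ ((n : ℤ) + ω) = ∑ ξ ∈ s, g ξ * ξ ^ n * ξ ^ ω := by
          refine Finset.sum_congr rfl fun ξ hξ => ?_
          rw [zpow_add₀ (hne ξ hξ), zpow_natCast, zpow_natCast]; ring
        rw [h1] at this
        have h2 : ∑ ξ ∈ s, g ξ * ξ ^ (n : ℤ) = ∑ ξ ∈ s, g ξ * ξ ^ n := by
          refine Finset.sum_congr rfl fun ξ _ => ?_
          rw [zpow_natCast]
        rw [h2] at this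
        calc ∑ ξ ∈ s, (g ξ * (ξ ^ ω - 1)) * ξ ^ n
            = (∑ ξ ∈ s, g ξ * ξ ^ n * ξ ^ ω) - ∑ ξ ∈ s, g ξ * ξ ^ n := by
              rw [← Finset.sum_sub_distrib]; exact Finset.sum_congr rfl fun ξ _ => by ring
          _ = 0 := by rw [this, sub_self]
      have := aux_vandermonde (fun ξ => g ξ * (ξ ^ ω - 1)) hz ζ hζ
      have hg := hmem ζ hζ
      rcases mul_eq_zero.1 this with h | h
      · exact absurd h hg
      · exact sub_eq_zero.1 h
    exact Nat.le_of_dvd hωpos hdvd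
end

section
/- Let f₁, ..., f_m : ℤ → ℂ be given by f_j(x) = ∑_{ζ} g_j(ζ) ζ^x where each sum is over the primitive ω_j-th roots of unity ζ in ℂ, the ω_j ≥ 1 are distinct integers, and each f_j is not identically zero. Then the fundamental period of f = f₁ + ... + f_m is lcm(ω₁, ..., ω_m). -/
lemma key_indep (S : Finset ℂ) (hS : ∀ ζ ∈ S, ζ ≠ 0) (c : ℂ → ℂ)
    (h : ∀ x : ℤ, ∑ ζ ∈ S, c ζ * ζ ^ x = 0) : ∀ ζ ∈ S, c ζ = 0 := by
  classical
  set ψ : {z // z ∈ S} → (Multiplicative ℤ →* ℂ) :=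
    fun z => (Units.coeHom ℂ).comp ((zpowersHom ℂˣ) (Units.mk0 z.1 (hS _ z.2))) with hψ
  have hψapp : ∀ z (y : Multiplicative ℤ), ψ z y = (z.1 : ℂ) ^ (Multiplicative.toAdd y) := by
    intro z y
    simp [hψ, Units.val_zpow_eq_zpow_val]
  have hinj : Function.Injective ψ := by
    intro a b hab
    have := congrArg (fun φ : Multiplicative ℤ →* ℂ => φ (Multiplicative.ofAdd 1)) hab
    simp only [hψapp, toAdd_ofAdd, zpow_one] at this
    exact Subtype.ext this
  have li : LinearIndependent ℂ (fun z : {z // z ∈ S} => (ψ z : Multiplicative ℤ → ℂ)) :=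
    (linearIndependent_monoidHom (Multiplicative ℤ) ℂ).comp ψ hinj
  intro ζ hζ
  have := Fintype.linearIndependent_iff.mp li (fun z => c z.1) ?_ ⟨ζ, hζ⟩
  · exact this
  · funext y
    have : ∑ z : {z // z ∈ S}, c z.1 * (z.1 : ℂ) ^ (Multiplicative.toAdd y) = 0 := by
      rw [Finset.sum_coe_sort S (fun ζ => c ζ * ζ ^ (Multiplicative.toAdd y))]
      exact h _
    simpa [Finset.sum_apply, hψapp] using this

theorem fundamental_period_of_sum_of_ramanujan_components (m : ℕ)
    (ω : Fin m → ℕ) (hω : ∀ j, 1 ≤ ω j) (hinj : Function.Injective ω)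
    (g : Fin m → ℂ → ℂ)
    (fcomp : Fin m → ℤ → ℂ)
    (hfcomp : ∀ j, ∀ x : ℤ, fcomp j x = ∑ ζ ∈ primitiveRoots (ω j) ℂ, g j ζ * ζ ^ x)
    (hne : ∀ j, ∃ x : ℤ, fcomp j x ≠ 0)
    (f : ℤ → ℂ) (hf : ∀ x : ℤ, f x = ∑ j, fcomp j x) :
    IsLeast {T : ℕ | 0 < T ∧ ∀ x : ℤ, f (x + T) = f x} (Finset.univ.lcm ω) := by
  classical
  set L := Finset.univ.lcm ω with hL
  have hprim : ∀ j, ∀ ζ ∈ primitiveRoots (ω j) ℂ, IsPrimitiveRoot ζ (ω j) := fun j ζ hζ =>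
    (mem_primitiveRoots (hω j)).mp hζ
  have hne0 : ∀ j, ∀ ζ ∈ primitiveRoots (ω j) ℂ, ζ ≠ 0 := fun j ζ hζ =>
    (hprim j ζ hζ).ne_zero (Nat.one_le_iff_ne_zero.mp (hω j))
  have hLpos : 0 < L := by
    refine Nat.pos_of_ne_zero ?_
    rw [hL, Ne, Finset.lcm_eq_zero_iff]
    intro h0
    obtain ⟨j, -, hj⟩ := h0
    have := hω j; omega
  constructor
  · refine ⟨hLpos, fun x => ?_⟩
    simp only [hf, hfcomp]
    refine Finset.sum_congr rfl fun j _ => Finset.sum_congr rfl fun ζ hζ => ?_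
    have hdvd : ((ω j : ℤ)) ∣ (L : ℤ) :=
      Int.natCast_dvd_natCast.mpr (Finset.dvd_lcm (Finset.mem_univ j))
    have h1 : ζ ^ (L : ℤ) = 1 := ((hprim j ζ hζ).zpow_eq_one_iff_dvd _).mpr hdvd
    rw [zpow_add₀ (hne0 j ζ hζ), h1, mul_one]
  · rintro T ⟨hT, hper⟩
    refine Nat.le_of_dvd hT (Finset.lcm_dvd fun j _ => ?_)
    -- set up the combined sum
    set S : Finset ℂ := Finset.univ.biUnion (fun j' => primitiveRoots (ω j') ℂ) with hSdef
    set c : ℂ → ℂ := fun ζ => ∑ j' : Fin m,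
      if ζ ∈ primitiveRoots (ω j') ℂ then g j' ζ * (ζ ^ (T : ℤ) - 1) else 0 with hc
    have hSsub : ∀ j', primitiveRoots (ω j') ℂ ⊆ S := fun j' =>
      show primitiveRoots (ω j') ℂ ⊆ Finset.univ.biUnion (fun j' => primitiveRoots (ω j') ℂ) from
        Finset.subset_biUnion_of_mem (fun j'' => primitiveRoots (ω j'') ℂ) (Finset.mem_univ j')
    have hS0 : ∀ ζ ∈ S, ζ ≠ 0 := by
      intro ζ hζ
      obtain ⟨j', -, hζ'⟩ := Finset.mem_biUnion.mp hζ
      exact hne0 j' ζ hζ'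
    have hzero : ∀ x : ℤ, ∑ ζ ∈ S, c ζ * ζ ^ x = 0 := by
      intro x
      have step : ∑ ζ ∈ S, c ζ * ζ ^ x
          = ∑ j' : Fin m, ∑ ζ ∈ primitiveRoots (ω j') ℂ, g j' ζ * (ζ ^ (T : ℤ) - 1) * ζ ^ x := by
        simp only [hc, Finset.sum_mul]
        rw [Finset.sum_comm]
        refine Finset.sum_congr rfl fun j' _ => ?_
        have hcongr : ∀ ζ ∈ S,
            (if ζ ∈ primitiveRoots (ω j') ℂ then g j' ζ * (ζ ^ (T : ℤ) - 1) else 0) * ζ ^ x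
            = if ζ ∈ primitiveRoots (ω j') ℂ then g j' ζ * (ζ ^ (T : ℤ) - 1) * ζ ^ x else 0 := by
          intro ζ _; split <;> simp
        rw [Finset.sum_congr rfl hcongr, Finset.sum_ite_mem,
          Finset.inter_eq_right.mpr (hSsub j')]
      rw [step]
      have hstep2 : ∀ j' : Fin m, ∑ ζ ∈ primitiveRoots (ω j') ℂ, g j' ζ * (ζ ^ (T : ℤ) - 1) * ζ ^ x
          = fcomp j' (x + T) - fcomp j' x := by
        intro j'
        rw [hfcomp, hfcomp, ← Finset.sum_sub_distrib]
        refine Finset.sum_congr rfl fun ζ hζ => ?_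
        rw [zpow_add₀ (hne0 j' ζ hζ)]
        ring
      simp only [hstep2, Finset.sum_sub_distrib, ← hf]
      rw [hper x, sub_self]
    have hcz := key_indep S hS0 c hzero
    -- find ζ₀ with nonzero coefficient
    obtain ⟨x₀, hx₀⟩ := hne j
    have hex : ∃ ζ ∈ primitiveRoots (ω j) ℂ, g j ζ ≠ 0 := by
      by_contra hall
      push_neg at hall
      exact hx₀ (by rw [hfcomp]; exact Finset.sum_eq_zero fun ζ hζ => by rw [hall ζ hζ, zero_mul])
    obtain ⟨ζ₀, hζ₀, hgζ₀⟩ := hex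
    have hc0 := hcz ζ₀ (hSsub j hζ₀)
    have hsingle : c ζ₀ = g j ζ₀ * (ζ₀ ^ (T : ℤ) - 1) := by
      show (∑ j' : Fin m, if ζ₀ ∈ primitiveRoots (ω j') ℂ then g j' ζ₀ * (ζ₀ ^ (T : ℤ) - 1) else 0)
        = g j ζ₀ * (ζ₀ ^ (T : ℤ) - 1)
      rw [Finset.sum_eq_single j]
      · rw [if_pos hζ₀]
      · intro j' _ hj'
        rw [if_neg]
        intro hζ'
        exact hj' (hinj ((hprim j' ζ₀ hζ').unique (hprim j ζ₀ hζ₀)))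
      · intro h; exact absurd (Finset.mem_univ j) h
    rw [hsingle] at hc0
    have : ζ₀ ^ (T : ℤ) = 1 := by
      rcases mul_eq_zero.mp hc0 with h | h
      · exact absurd h hgζ₀
      · linear_combination h
    have := ((hprim j ζ₀ hζ₀).zpow_eq_one_iff_dvd _).mp this
    exact Int.natCast_dvd_natCast.mp this
end
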